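/- Let p be a prime, i ≥ 1, and consider the group ring element (u^{(p-1)/p^i + ℤ} − 1)^j ∈ ℤ[ℤ_{p^∞}] acting on the element 1/p^i + ℤ of ℤ_{p^∞} ⊗ (group ring over ℤ_{p^∞}). Expanding by the binomial theorem, the coefficient of the constant term u^0 is (−1)^j only when all cancellations fail; for j < i the resulting element of ⊕_{b} ℤ_{p^∞} is nonzero, since the summand at b = 0 equals (−1)^j/p^i + ℤ ≠ 0 (all other terms u^{k(p-1)/p^i} with 1 ≤ k ≤ j < i have k(p-1)/p^i ∉ ℤ). -/

import Mathlib

abbrev QZ : Type := ℚ ⧸ AddSubgroup.zmultiples (1 : ℚ)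

def Prufer (p : ℕ) : AddSubgroup QZ where
  carrier := {x | ∃ k : ℕ, (p ^ k : ℕ) • x = 0}
  zero_mem' := ⟨0, smul_zero _⟩
  add_mem' := by
    rintro x y ⟨k, hk⟩ ⟨l, hl⟩
    refine ⟨k + l, ?_⟩
    have h1 : (p ^ (k + l) : ℕ) • x = 0 := by
      rw [pow_add, mul_comm, mul_nsmul', hk, smul_zero]
    have h2 : (p ^ (k + l) : ℕ) • y = 0 := by
      rw [pow_add, mul_nsmul', hl, smul_zero]
    rw [smul_add, h1, h2, add_zero]
  neg_mem' := by
    rintro x ⟨k, hk⟩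
    exact ⟨k, by rw [smul_neg, hk, neg_zero]⟩

def mkP (p : ℕ) (hp : p ≠ 0) (i : ℕ) (m : ℤ) : ↥(Prufer p) :=
  ⟨QuotientAddGroup.mk ((m : ℚ) / (p : ℚ) ^ i), by
    refine ⟨i, ?_⟩
    have hpi : ((p : ℚ) ^ i) ≠ 0 := pow_ne_zero i (Nat.cast_ne_zero.mpr hp)
    have hq : (p ^ i : ℕ) • ((m : ℚ) / (p : ℚ) ^ i) = (m : ℚ) := by
      rw [nsmul_eq_mul]
      push_cast
      field_simp
    rw [← QuotientAddGroup.mk_nsmul, hq, QuotientAddGroup.eq_zero_iff]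
    exact ⟨m, by simp⟩⟩

lemma mkP_eq_zero_iff (p : ℕ) (hp : p ≠ 0) (i : ℕ) (m : ℤ) :
    mkP p hp i m = 0 ↔ ((p : ℤ) ^ i) ∣ m := by
  have hpi : ((p : ℚ) ^ i) ≠ 0 := pow_ne_zero i (Nat.cast_ne_zero.mpr hp)
  rw [mkP, Subtype.ext_iff]
  show QuotientAddGroup.mk _ = (0 : QZ) ↔ _
  rw [QuotientAddGroup.eq_zero_iff, AddSubgroup.mem_zmultiples_iff]
  constructor
  · rintro ⟨n, hn⟩
    refine ⟨n, ?_⟩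
    have : (n : ℚ) = (m : ℚ) / (p : ℚ) ^ i := by simpa using hn
    have h2 := (div_eq_iff hpi).mp this.symm
    have : (m : ℚ) = (((p:ℤ)^i * n : ℤ) : ℚ) := by push_cast; linarith
    exact_mod_cast this
  · rintro ⟨n, rfl⟩
    refine ⟨n, ?_⟩
    have : ((((p:ℤ)^i * n : ℤ)) : ℚ) / (p : ℚ) ^ i = (n : ℚ) := by
      push_cast; field_simp
    rw [zsmul_eq_mul, mul_one]
    push_cast
    field_simp

lemma mkP_sub (p : ℕ) (hp : p ≠ 0) (i : ℕ) (a b : ℤ) :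
    mkP p hp i a - mkP p hp i b = mkP p hp i (a - b) := by
  apply Subtype.ext
  show (QuotientAddGroup.mk _ - QuotientAddGroup.mk _ : QZ) = QuotientAddGroup.mk _
  rw [← QuotientAddGroup.mk_sub]
  congr 1
  push_cast
  ring

lemma mkP_eq_iff (p : ℕ) (hp : p ≠ 0) (i : ℕ) (a b : ℤ) :
    mkP p hp i a = mkP p hp i b ↔ ((p : ℤ) ^ i) ∣ (a - b) := by
  rw [← sub_eq_zero, mkP_sub, mkP_eq_zero_iff]

theorem binomial_expansion_nonzero (p : ℕ) (hp : p.Prime) (i j : ℕ) (hji : j < i) :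
    (∑ k ∈ Finset.range (j + 1),
        Finsupp.single (mkP p hp.ne_zero i ((k : ℤ) * ((p : ℤ) - 1)))
          (((-1 : ℤ) ^ (j - k) * (j.choose k : ℤ)) • mkP p hp.ne_zero i 1)) ≠
      (0 : ↥(Prufer p) →₀ ↥(Prufer p)) := by
  intro h
  have hi : 0 < i := lt_of_le_of_lt (Nat.zero_le j) hji
  have hp2 : (2 : ℤ) ≤ (p : ℤ) := by exact_mod_cast hp.two_le
  have happ := congrArg (fun f => f (mkP p hp.ne_zero i 0)) h
  simp only [Finsupp.finset_sum_apply, Finsupp.coe_zero, Pi.zero_apply] at happ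
  rw [Finset.sum_eq_single 0] at happ
  · simp only [Nat.cast_zero, zero_mul] at happ
    rw [Finsupp.single_eq_same] at happ
    simp only [Nat.choose_zero_right, Nat.cast_one, mul_one, Nat.sub_zero] at happ
    have h1 : mkP p hp.ne_zero i 1 = 0 := by
      rcases Nat.even_or_odd j with he | ho
      · rwa [he.neg_one_pow, one_smul] at happ
      · rwa [ho.neg_one_pow, neg_smul, one_smul, neg_eq_zero] at happ
    rw [mkP_eq_zero_iff] at h1
    have := Int.le_of_dvd one_pos h1
    have : (2 : ℤ) ≤ (p : ℤ) ^ i := le_trans hp2 (le_self_pow₀ (by linarith) hi.ne')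
    omega
  · intro k hk hk0
    rw [Finsupp.single_eq_of_ne', ]
    intro hkeq
    rw [mkP_eq_iff, sub_zero] at hkeq
    have hk1 : 1 ≤ (k : ℤ) := by exact_mod_cast Nat.one_le_iff_ne_zero.mpr hk0
    have hkj : (k : ℤ) ≤ j := by
      have := Finset.mem_range.mp hk; exact_mod_cast Nat.lt_succ_iff.mp this
    have hpos : 0 < (k : ℤ) * ((p : ℤ) - 1) := by nlinarith
    have hle := Int.le_of_dvd hpos hkeq
    have hbern : 1 + (i : ℤ) * ((p : ℤ) - 1) ≤ (p : ℤ) ^ i := by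
      have h := one_add_mul_le_pow (a := (p : ℤ) - 1) (by linarith) i
      rw [show (1 : ℤ) + ((p : ℤ) - 1) = (p : ℤ) by ring] at h
      linarith
    have hji' : (j : ℤ) < i := by exact_mod_cast hji
    nlinarith
  · intro h0
    simp at h0
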